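/- Let R be a commutative ring, L a Lie algebra over R, and S a commutative semigroup, and equip Finsupp S L with the S-expanded bracket. Suppose z ∈ S is an absorbing element: z * s = z for all s ∈ S. Then the R-submodule I = {f ∈ Finsupp S L : f.support ⊆ {z}} is a Lie ideal of the S-expanded algebra: for every g ∈ Finsupp S L and every f ∈ I, ⁅g, f⁆ ∈ I. -/

import Mathlib

/-- **The `0_S`-components form a Lie ideal of the S-expanded algebra.**
Let `B` be the S-expanded bracket on `S →₀ L` (the unique `R`-bilinear
bracket with `⁅single s x, single t y⁆ = single (s * t) ⁅x, y⁆`) and let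
`z ∈ S` be absorbing (`z * s = z` for all `s`).  Then the submodule
`I = {f | f.support ⊆ {z}}` is a Lie ideal: `⁅g, f⁆ ∈ I` for every
`g : S →₀ L` and every `f ∈ I`. -/
theorem sExpansion_absorbing_isIdeal
    (R : Type*) [CommRing R] (L : Type*) [LieRing L] [LieAlgebra R L]
    (S : Type*) [CommSemigroup S]
    (B : (S →₀ L) →ₗ[R] (S →₀ L) →ₗ[R] (S →₀ L))
    (hB : ∀ (s t : S) (x y : L),
      B (Finsupp.single s x) (Finsupp.single t y)
        = Finsupp.single (s * t) ⁅x, y⁆)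
    (z : S) (hz : ∀ s : S, z * s = z) :
    ∀ g f : S →₀ L, f.support ⊆ {z} → (B g f).support ⊆ {z} := by
  classical
  intro g f hf
  have hf' : f = Finsupp.single z (f z) := by
    ext t
    rcases eq_or_ne t z with rfl | h
    · simp
    · rw [Finsupp.single_apply, if_neg (fun h' => h h'.symm)]
      exact Finsupp.notMem_support_iff.mp
        (fun hm => h (Finset.mem_singleton.mp (hf hm)))
  rw [hf']
  induction g using Finsupp.induction with
  | zero => simp
  | single_add s x g' _ _ ih =>
    rw [map_add, LinearMap.add_apply]
    refine Finsupp.support_add.trans (Finset.union_subset ?_ ih)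
    rw [hB]
    refine (Finsupp.support_single_subset).trans ?_
    rw [mul_comm, hz]
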